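/- Let β be the smallest Pisot number, i.e., the unique real root of X³ − X − 1, and let u = (β³, β, β³) and v = (β³, β³, β) be blocks of bases. For every Cantor real base B ∈ {u, v}^ω (an arbitrary infinite concatenation of the blocks u and v over the alphabet {β, β³}) and every n ≥ 0, the quasi-greedy expansion of 1 in the shifted base σ^{3n}(B) is the purely periodic word (200)^ω; in particular d*_B(1) = (200)^ω. Consequently, d*_B(1) is purely periodic for uncountably many aperiodic Cantor real bases B over {β, β³}. -/
import Mathlib


noncomputable section

/-- The quasi-greedy transformation `T*_β`, with `T*_β(0) = 0` and
`T*_β(x) = βx − ⌈βx − 1⌉` for `x ≠ 0`. -/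
def Tstar (β x : ℝ) : ℝ := if x = 0 then 0 else β * x - ⌈β * x - 1⌉

/-- `iterTstar B n r = (T*_{β_{n−1}} ∘ ⋯ ∘ T*_{β_0})(r)`. -/
def iterTstar (B : ℕ → ℝ) : ℕ → ℝ → ℝ
  | 0, r => r
  | n + 1, r => Tstar (B n) (iterTstar B n r)

/-- The `n`-th digit of the quasi-greedy `B`-expansion `d*_B(r)`. -/
def quasiGreedyDigit (B : ℕ → ℝ) (r : ℝ) (n : ℕ) : ℤ := ⌈B n * iterTstar B n r - 1⌉

/-- A sequence is ultimately periodic. -/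
def UltimatelyPeriodic {X : Type*} (f : ℕ → X) : Prop :=
  ∃ p : ℕ, 1 ≤ p ∧ ∃ N : ℕ, ∀ n, N ≤ n → f (n + p) = f n

/- ################# auxiliary lemmas ################# -/

lemma iterTstar_succ (B : ℕ → ℝ) (n : ℕ) (r : ℝ) :
    iterTstar B (n + 1) r = Tstar (B n) (iterTstar B n r) := rfl

lemma pisot_gt_one {β : ℝ} (hβ : β ^ 3 - β - 1 = 0) : 1 < β := by
  by_contra h
  push_neg at h
  nlinarith [sq_nonneg (2*β+1), sq_nonneg (β-1), sq_nonneg (β+1), sq_nonneg β,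
    sq_nonneg (β*(β+1))]

lemma pisot_lt_two {β : ℝ} (hβ : β ^ 3 - β - 1 = 0) : β < 2 := by
  have h1 := pisot_gt_one hβ
  by_contra h
  push_neg at h
  nlinarith [mul_nonneg (mul_nonneg (by linarith : (0:ℝ) ≤ β - 2)
    (by linarith : (0:ℝ) ≤ β)) (by linarith : (0:ℝ) ≤ β)]

section Tstar_facts

variable {β : ℝ} (hβ : β ^ 3 - β - 1 = 0)

include hβ

lemma Tstar1 : Tstar (β ^ 3) 1 = β - 1 := by
  have h1 := pisot_gt_one hβ
  have h2 := pisot_lt_two hβ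
  unfold Tstar
  rw [if_neg one_ne_zero]
  have hc : ⌈β ^ 3 * (1:ℝ) - 1⌉ = (2:ℤ) := by
    rw [Int.ceil_eq_iff]
    constructor <;> push_cast <;> nlinarith
  rw [hc]
  push_cast
  nlinarith

lemma Tstar2t : Tstar (β ^ 3) (β - 1) = β ^ 2 - 1 := by
  have h1 := pisot_gt_one hβ
  have hb2 : β ^ 2 ≤ 2 := by nlinarith
  have hv : β ^ 3 * (β - 1) = β ^ 2 - 1 := by linear_combination (β - 1) * hβ
  unfold Tstar
  rw [if_neg (by intro h; nlinarith : β - 1 ≠ 0)]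
  have hc : ⌈β ^ 3 * (β - 1) - 1⌉ = (0:ℤ) := by
    rw [hv, Int.ceil_eq_iff]
    constructor <;> push_cast <;> nlinarith
  rw [hc]
  push_cast
  nlinarith

lemma Tstar2f : Tstar β (β - 1) = β ^ 2 - β := by
  have h1 := pisot_gt_one hβ
  unfold Tstar
  rw [if_neg (by intro h; nlinarith : β - 1 ≠ 0)]
  have hc : ⌈β * (β - 1) - 1⌉ = (0:ℤ) := by
    rw [Int.ceil_eq_iff]
    constructor <;> push_cast <;> nlinarith
  rw [hc]
  push_cast
  ring

lemma Tstar3t : Tstar β (β ^ 2 - 1) = 1 := by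
  have h1 := pisot_gt_one hβ
  unfold Tstar
  rw [if_neg (by intro h; nlinarith : β ^ 2 - 1 ≠ 0)]
  have he : β * (β ^ 2 - 1) = 1 := by linear_combination hβ
  rw [he]
  norm_num

lemma Tstar3f : Tstar (β ^ 3) (β ^ 2 - β) = 1 := by
  have h1 := pisot_gt_one hβ
  unfold Tstar
  rw [if_neg (by intro h; nlinarith : β ^ 2 - β ≠ 0)]
  have he : β ^ 3 * (β ^ 2 - β) = 1 := by linear_combination (β^2 - β + 1) * hβ
  rw [he]
  norm_num

/-- The orbit invariant along blocks. -/
lemma key_inv (B : ℕ → ℝ) (ε : ℕ → Bool)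
    (hB : ∀ k : ℕ, B (3 * k) = β ^ 3 ∧ B (3 * k + 1) = (if ε k then β ^ 3 else β) ∧
      B (3 * k + 2) = (if ε k then β else β ^ 3)) :
    ∀ k : ℕ, iterTstar B (3 * k) 1 = 1 ∧ iterTstar B (3 * k + 1) 1 = β - 1 ∧
      iterTstar B (3 * k + 2) 1 = (if ε k then β ^ 2 - 1 else β ^ 2 - β) := by
  have step : ∀ k : ℕ, iterTstar B (3 * k) 1 = 1 →
      iterTstar B (3 * k + 1) 1 = β - 1 ∧
      iterTstar B (3 * k + 2) 1 = (if ε k then β ^ 2 - 1 else β ^ 2 - β) := by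
    intro k hk
    obtain ⟨e0, e1, e2⟩ := hB k
    have A : iterTstar B (3 * k + 1) 1 = β - 1 := by
      rw [iterTstar_succ, hk, e0, Tstar1 hβ]
    refine ⟨A, ?_⟩
    rw [show 3 * k + 2 = (3 * k + 1) + 1 from rfl, iterTstar_succ, A, e1]
    cases ε k <;> simp [Tstar2t hβ, Tstar2f hβ]
  have inv0 : ∀ k : ℕ, iterTstar B (3 * k) 1 = 1 := by
    intro k
    induction k with
    | zero => norm_num [iterTstar]
    | succ k ih =>
      obtain ⟨_, A2⟩ := step k ih
      obtain ⟨_, _, e2⟩ := hB k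
      rw [show 3 * (k + 1) = (3 * k + 2) + 1 by ring, iterTstar_succ, A2, e2]
      cases ε k <;> simp [Tstar3t hβ, Tstar3f hβ]
  intro k
  exact ⟨inv0 k, step k (inv0 k)⟩

/-- The digits of the quasi-greedy expansion of 1. -/
lemma key_digits (B : ℕ → ℝ) (ε : ℕ → Bool)
    (hB : ∀ k : ℕ, B (3 * k) = β ^ 3 ∧ B (3 * k + 1) = (if ε k then β ^ 3 else β) ∧
      B (3 * k + 2) = (if ε k then β else β ^ 3)) :
    ∀ m : ℕ, quasiGreedyDigit B 1 m = (if m % 3 = 0 then 2 else 0) := by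
  have h1 := pisot_gt_one hβ
  have h2 := pisot_lt_two hβ
  have hb2 : β ^ 2 ≤ 2 := by nlinarith
  intro m
  obtain ⟨k, hk⟩ : ∃ k, m = 3 * k ∨ m = 3 * k + 1 ∨ m = 3 * k + 2 := ⟨m / 3, by omega⟩
  obtain ⟨i0, i1, i2⟩ := key_inv hβ B ε hB k
  obtain ⟨e0, e1, e2⟩ := hB k
  unfold quasiGreedyDigit
  rcases hk with hm | hm | hm <;> subst hm
  · rw [if_pos (by omega), i0, e0, Int.ceil_eq_iff]
    constructor <;> push_cast <;> nlinarith
  · rw [if_neg (by omega), i1, e1]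
    cases hε : ε k <;> simp only [if_true, if_false, Bool.false_eq_true] <;>
      (rw [Int.ceil_eq_iff]; constructor) <;> push_cast <;> nlinarith
  · rw [if_neg (by omega), i2, e2]
    cases hε : ε k <;> rw [hε] at i2 <;> simp only [if_true, if_false, Bool.false_eq_true] <;>
      (rw [Int.ceil_eq_iff]; constructor) <;> push_cast <;> nlinarith

end Tstar_facts

/-- The base sequence encoded by `ε`. -/
def encB (β : ℝ) (ε : ℕ → Bool) : ℕ → ℝ := fun i =>
  if i % 3 = 0 then β ^ 3
  else if i % 3 = 1 then (if ε (i / 3) then β ^ 3 else β)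
  else (if ε (i / 3) then β else β ^ 3)

lemma encB_struct (β : ℝ) (ε : ℕ → Bool) :
    ∀ k : ℕ, encB β ε (3 * k) = β ^ 3 ∧
      encB β ε (3 * k + 1) = (if ε k then β ^ 3 else β) ∧
      encB β ε (3 * k + 2) = (if ε k then β else β ^ 3) := by
  intro k
  refine ⟨?_, ?_, ?_⟩
  · unfold encB
    rw [if_pos (by omega : (3 * k) % 3 = 0)]
  · unfold encB
    rw [if_neg (by omega : ¬ (3 * k + 1) % 3 = 0),
      if_pos (by omega : (3 * k + 1) % 3 = 1), show (3 * k + 1) / 3 = k by omega]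
  · unfold encB
    rw [if_neg (by omega : ¬ (3 * k + 2) % 3 = 0),
      if_neg (by omega : ¬ (3 * k + 2) % 3 = 1), show (3 * k + 2) / 3 = k by omega]

lemma if_bool_inj {β : ℝ} (hne : β ≠ β ^ 3) {a b : Bool}
    (h : (if a then β ^ 3 else β) = (if b then β ^ 3 else β)) : a = b := by
  cases a <;> cases b <;> simp_all

lemma countable_UP : {f : ℕ → Bool | UltimatelyPeriodic f}.Countable := by
  have hsub : {f : ℕ → Bool | UltimatelyPeriodic f} ⊆
      ⋃ (p : ℕ) (N : ℕ), {f : ℕ → Bool | 1 ≤ p ∧ ∀ n, N ≤ n → f (n + p) = f n} := by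
    rintro f ⟨p, hp, N, hN⟩
    exact Set.mem_iUnion.2 ⟨p, Set.mem_iUnion.2 ⟨N, hp, hN⟩⟩
  refine Set.Countable.mono hsub ?_
  refine Set.countable_iUnion fun p => Set.countable_iUnion fun N => ?_
  rw [← Set.countable_coe_iff]
  refine Function.Injective.countable
    (f := fun f : ↥{f : ℕ → Bool | 1 ≤ p ∧ ∀ n, N ≤ n → f (n + p) = f n} =>
      (fun j : Fin (N + p) => f.1 j)) ?_
  intro f g hfg
  apply Subtype.ext
  funext n
  induction n using Nat.strong_induction_on with
  | _ n ih =>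
    by_cases hn : n < N + p
    · exact congrFun hfg ⟨n, hn⟩
    · push_neg at hn
      have hp : 1 ≤ p := f.2.1
      have hf1 : f.1 n = f.1 (n - p) := by
        have := f.2.2 (n - p) (by omega)
        rw [show n - p + p = n by omega] at this
        exact this
      have hg1 : g.1 n = g.1 (n - p) := by
        have := g.2.2 (n - p) (by omega)
        rw [show n - p + p = n by omega] at this
        exact this
      rw [hf1, hg1, ih (n - p) (by omega)]

lemma not_countable_bool_seq : ¬ Countable (ℕ → Bool) := by
  intro h
  obtain ⟨f, hf⟩ := exists_surjective_nat (ℕ → Bool)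
  obtain ⟨m, hm⟩ := hf (fun n => !(f n n))
  have := congrFun hm m
  simp at this

/-- Let `β` be the smallest Pisot number, i.e. the real root of `X³ − X − 1`, and let
`u = (β³, β, β³)`, `v = (β³, β³, β)`.  For every Cantor real base `B ∈ {u,v}^ω`
(blockwise concatenation encoded by `ε : ℕ → Bool`, `ε k = true` meaning block `v`)
and every `n`, the quasi-greedy expansion of `1` in `σ^{3n}(B)` is `(200)^ω`; in
particular `d*_B(1) = (200)^ω`.  Consequently, `d*_B(1)` is purely periodic for
uncountably many aperiodic Cantor real bases `B` over `{β, β³}`. -/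
theorem smallest_pisot_two_walks_periodic
    (β : ℝ) (hβ : β ^ 3 - β - 1 = 0) :
    (∀ B : ℕ → ℝ,
      (∃ ε : ℕ → Bool, ∀ k : ℕ,
        B (3 * k) = β ^ 3 ∧
        B (3 * k + 1) = (if ε k then β ^ 3 else β) ∧
        B (3 * k + 2) = (if ε k then β else β ^ 3)) →
      ∀ n m : ℕ,
        quasiGreedyDigit (fun i => B (3 * n + i)) 1 m =
          (if m % 3 = 0 then 2 else 0)) ∧
    ¬ Set.Countable {B : ℕ → ℝ |
        (∀ i, B i ∈ ({β, β ^ 3} : Set ℝ)) ∧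
        ¬ UltimatelyPeriodic B ∧
        ∀ m : ℕ, quasiGreedyDigit B 1 m = (if m % 3 = 0 then 2 else 0)} := by
  have h1 := pisot_gt_one hβ
  have hne : β ≠ β ^ 3 := by nlinarith
  constructor
  · rintro B ⟨ε, hB⟩ n m
    refine key_digits hβ (fun i => B (3 * n + i)) (fun k => ε (n + k)) ?_ m
    intro k
    refine ⟨?_, ?_, ?_⟩
    · show B (3 * n + 3 * k) = β ^ 3
      rw [show 3 * n + 3 * k = 3 * (n + k) by ring]
      exact (hB (n + k)).1
    · show B (3 * n + (3 * k + 1)) = _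
      rw [show 3 * n + (3 * k + 1) = 3 * (n + k) + 1 by ring]
      exact (hB (n + k)).2.1
    · show B (3 * n + (3 * k + 2)) = _
      rw [show 3 * n + (3 * k + 2) = 3 * (n + k) + 2 by ring]
      exact (hB (n + k)).2.2
  · intro hS
    have hinj : Function.Injective (encB β) := by
      intro ε ε' h
      funext k
      have hk := congrFun h (3 * k + 1)
      rw [(encB_struct β ε k).2.1, (encB_struct β ε' k).2.1] at hk
      exact if_bool_inj hne hk
    have hmem : ∀ ε : ℕ → Bool, ¬ UltimatelyPeriodic ε →
        encB β ε ∈ {B : ℕ → ℝ |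
          (∀ i, B i ∈ ({β, β ^ 3} : Set ℝ)) ∧
          ¬ UltimatelyPeriodic B ∧
          ∀ m : ℕ, quasiGreedyDigit B 1 m = (if m % 3 = 0 then 2 else 0)} := by
      intro ε hup
      refine ⟨?_, ?_, ?_⟩
      · intro i
        unfold encB
        split_ifs <;> simp
      · intro hupB
        apply hup
        obtain ⟨p, hp, N, hN⟩ := hupB
        refine ⟨p, hp, N, fun k hk => ?_⟩
        have h3 : encB β ε (3 * (k + p) + 1) = encB β ε (3 * k + 1) := by
          rw [show 3 * (k + p) + 1 = 3 * k + 1 + 2 * p + p by ring,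
            hN _ (by omega), show 3 * k + 1 + 2 * p = 3 * k + 1 + p + p by ring,
            hN _ (by omega), hN _ (by omega)]
        rw [(encB_struct β ε (k + p)).2.1, (encB_struct β ε k).2.1] at h3
        exact if_bool_inj hne h3
      · exact key_digits hβ (encB β ε) ε (encB_struct β ε)
    have hG : {ε : ℕ → Bool | ¬ UltimatelyPeriodic ε}.Countable :=
      Set.Countable.mono (fun ε hε => hmem ε hε) (hS.preimage hinj)
    have huniv : (Set.univ : Set (ℕ → Bool)).Countable := by
      refine Set.Countable.mono ?_ (countable_UP.union hG)
      intro f _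
      by_cases h : UltimatelyPeriodic f
      · exact Or.inl h
      · exact Or.inr h
    exact not_countable_bool_seq (Set.countable_univ_iff.mp huniv)
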